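/- Fix N ≥ 2 and define N×N matrices T, T* with T_{m,n} = 2^{n-m}(N-1-m)!/((n-m)!(N-1-n)!) for m ≤ n (else 0) and T*_{n,m} = (-2)^{m-n}n!/(m!(n-m)!) for m ≤ n (else 0). Then T·T*·T = T*·T·T* (the braid relation). -/

import Mathlib

/-- `T_{m,n} = 2^{n-m}(N-1-m)!/((n-m)!(N-1-n)!)` for `m ≤ n`, else `0`. -/
noncomputable def Tmat (N : ℕ) : Matrix (Fin N) (Fin N) ℚ :=
  Matrix.of fun m n =>
    if (m : ℕ) ≤ (n : ℕ) then
      2 ^ ((n : ℕ) - (m : ℕ)) * ((N - 1 - (m : ℕ)).factorial : ℚ) /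
        ((((n : ℕ) - (m : ℕ)).factorial : ℚ) * ((N - 1 - (n : ℕ)).factorial : ℚ))
    else 0

/-- `T*_{n,m} = (-2)^{m-n}·n!/(m!(n-m)!)` for `m ≤ n`, else `0`
(first index = row, second index = column). -/
noncomputable def TstarMat (N : ℕ) : Matrix (Fin N) (Fin N) ℚ :=
  Matrix.of fun n m =>
    if (m : ℕ) ≤ (n : ℕ) then
      (-2 : ℚ) ^ ((m : ℤ) - (n : ℤ)) * (((n : ℕ).factorial : ℚ)) /
        ((((m : ℕ).factorial : ℚ)) * ((((n : ℕ) - (m : ℕ)).factorial : ℚ)))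
    else 0

open Finset

/-- Lower Pascal matrix with parameter `s`. -/
noncomputable def Pmat (N : ℕ) (s : ℚ) : Matrix (Fin N) (Fin N) ℚ :=
  Matrix.of fun m n =>
    if (n : ℕ) ≤ (m : ℕ) then (((m : ℕ).choose (n : ℕ) : ℚ)) * s ^ ((m : ℕ) - (n : ℕ)) else 0

/-- Antidiagonal matrix `V`. -/
noncomputable def Vmat (N : ℕ) : Matrix (Fin N) (Fin N) ℚ :=
  Matrix.of fun m n =>
    if (m : ℕ) + (n : ℕ) = N - 1 then (2 : ℚ) ^ (n : ℕ) * (-2⁻¹ : ℚ) ^ (m : ℕ) else 0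

set_option maxRecDepth 10000 in
/-- Key alternating Vandermonde-type identity. -/
lemma key1 (m : ℕ) : ∀ d n : ℕ, m ≤ d →
    ∑ j ∈ range (m + 1), (-1 : ℚ) ^ j * (m.choose j : ℚ) * ((d - j).choose n : ℚ)
      = if m ≤ n then (((d - m).choose (n - m) : ℕ) : ℚ) else 0 := by
  induction m with
  | zero => intro d n _; simp
  | succ m ih =>
    intro d n hd
    have h2 : m ≤ d - 1 := by omega
    have hsub : ∀ i : ℕ, d - (i + 1) = d - 1 - i := fun i => by omega
    have e1 : ∑ j ∈ range (m + 1 + 1), (-1 : ℚ) ^ j * ((m+1).choose j : ℚ) * ((d - j).choose n : ℚ)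
        = (∑ j ∈ range (m + 1), (-1 : ℚ) ^ j * (m.choose j : ℚ) * ((d - j).choose n : ℚ))
          - ∑ j ∈ range (m + 1), (-1 : ℚ) ^ j * (m.choose j : ℚ) * ((d - 1 - j).choose n : ℚ) := by
      rw [Finset.sum_range_succ'
        (fun j => (-1 : ℚ) ^ j * ((m+1).choose j : ℚ) * ((d - j).choose n : ℚ)) (m+1),
        Finset.sum_range_succ'
        (fun j => (-1 : ℚ) ^ j * (m.choose j : ℚ) * ((d - j).choose n : ℚ)) m]
      have hF : ∀ i ∈ range (m+1),
          (fun j => (-1 : ℚ) ^ j * ((m+1).choose j : ℚ) * ((d - j).choose n : ℚ)) (i+1)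
          = -((-1 : ℚ) ^ i * (m.choose i : ℚ) * ((d - 1 - i).choose n : ℚ))
            + -((-1 : ℚ) ^ i * (m.choose (i+1) : ℚ) * ((d - 1 - i).choose n : ℚ)) := by
        intro i _
        simp only [Nat.choose_succ_succ, Nat.cast_add, hsub i]
        ring
      rw [Finset.sum_congr rfl hF, Finset.sum_add_distrib]
      have hG : ∀ i ∈ range m,
          (fun j => (-1 : ℚ) ^ j * (m.choose j : ℚ) * ((d - j).choose n : ℚ)) (i+1)
          = -((-1 : ℚ) ^ i * (m.choose (i+1) : ℚ) * ((d - 1 - i).choose n : ℚ)) := by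
        intro i _
        simp only [hsub i]
        ring
      rw [Finset.sum_congr rfl hG,
        Finset.sum_range_succ
          (fun i => -((-1 : ℚ) ^ i * (m.choose (i+1) : ℚ) * ((d - 1 - i).choose n : ℚ))) m,
        show ∑ j ∈ range (m + 1), (-1 : ℚ) ^ j * (m.choose j : ℚ) * ((d - 1 - j).choose n : ℚ)
          = -∑ i ∈ range (m+1), -((-1 : ℚ) ^ i * (m.choose i : ℚ) * ((d - 1 - i).choose n : ℚ))
          by rw [← Finset.sum_neg_distrib]; exact Finset.sum_congr rfl fun i _ => by ring]
      simp only [Nat.choose_succ_self, Nat.cast_zero, Nat.choose_zero_right, Nat.cast_one]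
      ring
    rw [e1, ih d n (by omega), ih (d-1) n h2]
    have hd1 : d - 1 - m = d - (m+1) := by omega
    rw [hd1]
    by_cases h : m + 1 ≤ n
    · rw [if_pos (show m ≤ n by omega), if_pos (show m ≤ n by omega), if_pos h]
      have h3 : n - m = (n - (m+1)) + 1 := by omega
      have h4 : d - m = (d - (m+1)) + 1 := by omega
      rw [h3, h4, Nat.choose_succ_succ]
      push_cast
      ring
    · by_cases hmn : m ≤ n
      · have : m = n := by omega
        subst this
        rw [if_pos le_rfl, if_neg h, Nat.sub_self, Nat.choose_zero_right,
          Nat.choose_zero_right]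
        norm_num
      · rw [if_neg hmn, if_neg hmn, if_neg h]
        norm_num

lemma neg_one_pow_sub (a b : ℕ) (h : b ≤ a) : (-1 : ℚ) ^ (a - b) = (-1) ^ a * (-1) ^ b := by
  conv_rhs => rw [← Nat.sub_add_cancel h, pow_add]
  rw [mul_assoc, ← pow_add]
  have he : Even (b + b) := ⟨b, rfl⟩
  rw [he.neg_one_pow, mul_one]

lemma key2 (m n : ℕ) :
    ∑ k ∈ range (m + 1), (-1 : ℚ) ^ k * (m.choose k : ℚ) * (k.choose n : ℚ)
      = if m = n then (-1 : ℚ) ^ n else 0 := by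
  have h1 := key1 m m n le_rfl
  have h2 : ∑ k ∈ range (m + 1), (-1 : ℚ) ^ k * (m.choose k : ℚ) * (k.choose n : ℚ)
      = ∑ j ∈ range (m + 1),
          (fun k => (-1 : ℚ) ^ k * (m.choose k : ℚ) * (k.choose n : ℚ)) (m + 1 - 1 - j) :=
    (Finset.sum_range_reflect _ _).symm
  rw [h2]
  have h3 : ∀ j ∈ range (m + 1),
      (fun k => (-1 : ℚ) ^ k * (m.choose k : ℚ) * (k.choose n : ℚ)) (m + 1 - 1 - j)
      = (-1 : ℚ) ^ m * ((-1 : ℚ) ^ j * (m.choose j : ℚ) * ((m - j).choose n : ℚ)) := by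
    intro j hj
    have hjm : j ≤ m := by simpa using Nat.lt_succ_iff.mp (Finset.mem_range.mp hj)
    simp only [show m + 1 - 1 - j = m - j from by omega]
    rw [neg_one_pow_sub m j hjm, Nat.choose_symm hjm]
    ring
  rw [Finset.sum_congr rfl h3, ← Finset.mul_sum, h1, Nat.sub_self]
  by_cases h : m = n
  · subst h
    rw [if_pos le_rfl, if_pos rfl, Nat.sub_self, Nat.choose_self]
    norm_num
  · rw [if_neg h]
    by_cases h4 : m ≤ n
    · rw [if_pos h4, Nat.choose_eq_zero_of_lt (by omega)]
      norm_num
    · rw [if_neg h4, mul_zero]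

lemma Tentry (N : ℕ) (m n : Fin N) : Tmat N m n =
    if (m : ℕ) ≤ (n : ℕ) then
      (2 : ℚ) ^ ((n : ℕ) - (m : ℕ)) * (((N - 1 - (m : ℕ)).choose ((n : ℕ) - (m : ℕ)) : ℕ) : ℚ)
    else 0 := by
  have hm := m.isLt; have hn := n.isLt
  simp only [Tmat, Matrix.of_apply]
  split
  · rename_i h
    rw [Nat.cast_choose ℚ (show (n : ℕ) - (m : ℕ) ≤ N - 1 - (m : ℕ) by omega),
      show N - 1 - (m : ℕ) - ((n : ℕ) - (m : ℕ)) = N - 1 - (n : ℕ) from by omega]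
    ring
  · rfl

lemma hTstar (N : ℕ) : TstarMat N = Pmat N (-2⁻¹) := by
  ext a b
  have ha := a.isLt; have hb := b.isLt
  simp only [TstarMat, Pmat, Matrix.of_apply]
  split
  · rename_i h
    have hz : ((b : ℕ) : ℤ) - ((a : ℕ) : ℤ) = -(((a : ℕ) - (b : ℕ) : ℕ) : ℤ) := by
      push_cast; omega
    rw [hz, zpow_neg, zpow_natCast, Nat.cast_choose ℚ h,
      show (-2⁻¹ : ℚ) = (-2 : ℚ)⁻¹ from by norm_num, inv_pow]
    ring
  · rfl

lemma hVV (N : ℕ) : Vmat N * Vmat N = ((-1 : ℚ) ^ (N - 1)) • 1 := by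
  ext a b
  have ha := a.isLt; have hb := b.isLt
  rw [Matrix.mul_apply,
    Finset.sum_eq_single (⟨N - 1 - (a : ℕ), by omega⟩ : Fin N)]
  · simp only [Vmat, Matrix.of_apply, Matrix.smul_apply, Matrix.one_apply, smul_eq_mul]
    rw [if_pos (show (a : ℕ) + (N - 1 - (a : ℕ)) = N - 1 from by omega)]
    by_cases h : N - 1 - (a : ℕ) + (b : ℕ) = N - 1
    · have hab : a = b := Fin.ext (by omega)
      rw [if_pos h, if_pos hab, mul_one,
        show N - 1 = (N - 1 - (a : ℕ)) + (a : ℕ) from by omega]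
      rw [show (-2⁻¹ : ℚ) = -1 * 2⁻¹ from by norm_num, mul_pow]
      subst hab
      field_simp
      simp only [Nat.add_sub_cancel]
      simp only [neg_pow (1 / 2 : ℚ), div_pow, one_pow]
      field_simp
      ring
    · rw [if_neg h, if_neg (fun hc => h (by subst hc; omega)), mul_zero, mul_zero]
  · intro l _ hl
    simp only [Vmat, Matrix.of_apply]
    rw [if_neg (fun hc => hl (Fin.ext (show (l : ℕ) = N - 1 - (a : ℕ) from by omega))),
      zero_mul]
  · intro h; exact absurd (Finset.mem_univ _) h

lemma hT2 (N : ℕ) :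
    Tmat N = ((-1 : ℚ) ^ (N - 1)) • (Vmat N * (Pmat N (-2⁻¹) * Vmat N)) := by
  ext m n
  have hm := m.isLt; have hn := n.isLt
  rw [Matrix.smul_apply, Matrix.mul_apply,
    Finset.sum_eq_single (⟨N - 1 - (m : ℕ), by omega⟩ : Fin N)]
  · rw [Matrix.mul_apply,
      Finset.sum_eq_single (⟨N - 1 - (n : ℕ), by omega⟩ : Fin N)]
    · simp only [Vmat, Pmat, Matrix.of_apply, smul_eq_mul]
      rw [if_pos (show (m : ℕ) + (N - 1 - (m : ℕ)) = N - 1 from by omega),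
        if_pos (show N - 1 - (n : ℕ) + (n : ℕ) = N - 1 from by omega)]
      rw [Tentry]
      by_cases h : (m : ℕ) ≤ (n : ℕ)
      · rw [if_pos h, if_pos (show N - 1 - (n : ℕ) ≤ N - 1 - (m : ℕ) from by omega)]
        rw [show (N - 1 - (m : ℕ)).choose (N - 1 - (n : ℕ))
            = (N - 1 - (m : ℕ)).choose ((n : ℕ) - (m : ℕ)) from by
          rw [← Nat.choose_symm (show N - 1 - (n : ℕ) ≤ N - 1 - (m : ℕ) from by omega),
            show N - 1 - (m : ℕ) - (N - 1 - (n : ℕ)) = (n : ℕ) - (m : ℕ) from by omega]]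
        rw [show N - 1 - (m : ℕ) - (N - 1 - (n : ℕ)) = (n : ℕ) - (m : ℕ) from by omega]
        rw [show N - 1 - (m : ℕ) = ((n : ℕ) - (m : ℕ)) + (N - 1 - (n : ℕ)) from by omega]
        rw [show ((-1 : ℚ)) ^ (N - 1)
            = ((-1 : ℚ)) ^ (((n : ℕ) - (m : ℕ)) + (N - 1 - (n : ℕ)) + (m : ℕ)) from by
          rw [show ((n : ℕ) - (m : ℕ)) + (N - 1 - (n : ℕ)) + (m : ℕ) = N - 1 from by omega]]
        rw [show (2 : ℚ) ^ (n : ℕ)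
            = (2 : ℚ) ^ (((n : ℕ) - (m : ℕ)) + (m : ℕ)) from by
          rw [show ((n : ℕ) - (m : ℕ)) + (m : ℕ) = (n : ℕ) from by omega]]
        simp only [show (-2⁻¹ : ℚ) = -1 * 2⁻¹ from by norm_num, mul_pow]
        field_simp
        ring_nf
        simp only [pow_mul', neg_one_sq, one_pow, mul_one, one_mul]
        rw [div_pow, div_pow, div_pow, one_pow, one_pow, one_pow]
        field_simp
        rw [← pow_mul, ← pow_mul, Nat.mul_comm]
      · rw [if_neg h,
          if_neg (show ¬ N - 1 - (n : ℕ) ≤ N - 1 - (m : ℕ) from by omega)]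
        ring
    · intro l _ hl
      simp only [Vmat, Matrix.of_apply]
      rw [if_neg (fun hc => hl (Fin.ext (show (l : ℕ) = N - 1 - (n : ℕ) from by omega))),
        mul_zero]
    · intro h; exact absurd (Finset.mem_univ _) h
  · intro l _ hl
    simp only [Vmat, Matrix.of_apply]
    rw [if_neg (fun hc => hl (Fin.ext (show (l : ℕ) = N - 1 - (m : ℕ) from by omega))),
      zero_mul]
  · intro h; exact absurd (Finset.mem_univ _) h

lemma hT1 (N : ℕ) : Tmat N = Pmat N 2⁻¹ * (Vmat N * Pmat N 2⁻¹) := by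
  ext m n
  have hm := m.isLt; have hn := n.isLt
  rw [Matrix.mul_apply]
  have inner : ∀ k : Fin N, (Vmat N * Pmat N 2⁻¹) k n =
      (2 : ℚ) ^ (N - 1 - (k : ℕ)) * (-2⁻¹ : ℚ) ^ (k : ℕ) *
        ((((N - 1 - (k : ℕ)).choose (n : ℕ) : ℕ) : ℚ) *
          (2⁻¹ : ℚ) ^ (N - 1 - (k : ℕ) - (n : ℕ))) := by
    intro k
    have hk := k.isLt
    rw [Matrix.mul_apply, Finset.sum_eq_single (⟨N - 1 - (k : ℕ), by omega⟩ : Fin N)]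
    · simp only [Vmat, Pmat, Matrix.of_apply]
      rw [if_pos (show (k : ℕ) + (N - 1 - (k : ℕ)) = N - 1 from by omega)]
      by_cases hnk : (n : ℕ) ≤ N - 1 - (k : ℕ)
      · rw [if_pos hnk]
      · rw [if_neg hnk, Nat.choose_eq_zero_of_lt (by omega)]
        simp
    · intro l _ hl
      simp only [Vmat, Matrix.of_apply]
      rw [if_neg (fun hc => hl (Fin.ext (show (l : ℕ) = N - 1 - (k : ℕ) from by omega))),
        zero_mul]
    · intro h; exact absurd (Finset.mem_univ _) h
  simp only [inner]
  simp only [Pmat, Matrix.of_apply]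
  rw [Fin.sum_univ_eq_sum_range (fun k =>
    (if k ≤ (m : ℕ) then (((m : ℕ).choose k : ℕ) : ℚ) * (2⁻¹ : ℚ) ^ ((m : ℕ) - k) else 0) *
      ((2 : ℚ) ^ (N - 1 - k) * (-2⁻¹ : ℚ) ^ k *
        ((((N - 1 - k).choose (n : ℕ) : ℕ) : ℚ) * (2⁻¹ : ℚ) ^ (N - 1 - k - (n : ℕ))))) N]
  rw [(Finset.sum_subset (Finset.range_subset_range.mpr (show (m : ℕ) + 1 ≤ N from by omega))
      (fun x _ hx => by
        rw [if_neg (show ¬ x ≤ (m : ℕ) from by simpa using hx), zero_mul])).symm]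
  have step2 : ∑ k ∈ Finset.range ((m : ℕ) + 1),
      ((if k ≤ (m : ℕ) then (((m : ℕ).choose k : ℕ) : ℚ) * (2⁻¹ : ℚ) ^ ((m : ℕ) - k) else 0) *
        ((2 : ℚ) ^ (N - 1 - k) * (-2⁻¹ : ℚ) ^ k *
          ((((N - 1 - k).choose (n : ℕ) : ℕ) : ℚ) * (2⁻¹ : ℚ) ^ (N - 1 - k - (n : ℕ)))))
      = ((2 : ℚ) ^ (n : ℕ) * ((2 : ℚ) ^ (m : ℕ))⁻¹) *
          ∑ k ∈ Finset.range ((m : ℕ) + 1),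
            (-1 : ℚ) ^ k * (((m : ℕ).choose k : ℕ) : ℚ) * (((N - 1 - k).choose (n : ℕ) : ℕ) : ℚ) := by
    rw [Finset.mul_sum]
    refine Finset.sum_congr rfl fun k hk => ?_
    have hkm : k ≤ (m : ℕ) := by
      have := Finset.mem_range.mp hk; omega
    rw [if_pos hkm]
    by_cases hnk : (n : ℕ) ≤ N - 1 - k
    · rw [show N - 1 - k = (N - 1 - k - (n : ℕ)) + (n : ℕ) from by omega]
      simp only [Nat.add_sub_cancel]
      rw [show (m : ℕ) = ((m : ℕ) - k) + k from by omega]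
      simp only [Nat.add_sub_cancel]
      generalize (m : ℕ) - k = a
      generalize N - 1 - k - (n : ℕ) = b
      simp only [show (-2⁻¹ : ℚ) = -1 * 2⁻¹ from by norm_num, mul_pow]
      field_simp
      simp only [div_pow, one_pow]
      field_simp
      ring
    · rw [Nat.choose_eq_zero_of_lt (show N - 1 - k < (n : ℕ) from by omega)]
      simp
  rw [step2, key1 (m : ℕ) (N - 1) (n : ℕ) (by omega), Tentry]
  by_cases h : (m : ℕ) ≤ (n : ℕ)
  · rw [if_pos h, if_pos h]
    rw [show (2 : ℚ) ^ (n : ℕ) = (2 : ℚ) ^ (((n : ℕ) - (m : ℕ)) + (m : ℕ)) from by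
      rw [show ((n : ℕ) - (m : ℕ)) + (m : ℕ) = (n : ℕ) from by omega]]
    rw [pow_add]
    field_simp
  · rw [if_neg h, if_neg h, mul_zero]

lemma hPP (N : ℕ) : Pmat N 2⁻¹ * Pmat N (-2⁻¹) = 1 := by
  ext m n
  have hm := m.isLt; have hn := n.isLt
  rw [Matrix.mul_apply]
  simp only [Pmat, Matrix.of_apply]
  rw [Fin.sum_univ_eq_sum_range (fun k =>
    (if k ≤ (m : ℕ) then (((m : ℕ).choose k : ℕ) : ℚ) * (2⁻¹ : ℚ) ^ ((m : ℕ) - k) else 0) *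
      (if (n : ℕ) ≤ k then ((k.choose (n : ℕ) : ℕ) : ℚ) * (-2⁻¹ : ℚ) ^ (k - (n : ℕ)) else 0)) N]
  rw [(Finset.sum_subset (Finset.range_subset_range.mpr (show (m : ℕ) + 1 ≤ N from by omega))
      (fun x _ hx => by
        rw [if_neg (show ¬ x ≤ (m : ℕ) from by simpa using hx), zero_mul])).symm]
  have step : ∑ k ∈ Finset.range ((m : ℕ) + 1),
      ((if k ≤ (m : ℕ) then (((m : ℕ).choose k : ℕ) : ℚ) * (2⁻¹ : ℚ) ^ ((m : ℕ) - k) else 0) *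
        (if (n : ℕ) ≤ k then ((k.choose (n : ℕ) : ℕ) : ℚ) * (-2⁻¹ : ℚ) ^ (k - (n : ℕ)) else 0))
      = ((2⁻¹ : ℚ) ^ ((m : ℕ) - (n : ℕ)) * (-1 : ℚ) ^ (n : ℕ)) *
          ∑ k ∈ Finset.range ((m : ℕ) + 1),
            (-1 : ℚ) ^ k * (((m : ℕ).choose k : ℕ) : ℚ) * ((k.choose (n : ℕ) : ℕ) : ℚ) := by
    rw [Finset.mul_sum]
    refine Finset.sum_congr rfl fun k hk => ?_
    have hkm : k ≤ (m : ℕ) := by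
      have := Finset.mem_range.mp hk; omega
    rw [if_pos hkm]
    by_cases hnk : (n : ℕ) ≤ k
    · rw [if_pos hnk,
        show (m : ℕ) - (n : ℕ) = ((m : ℕ) - k) + (k - (n : ℕ)) from by omega]
      simp only [show (-2⁻¹ : ℚ) = -1 * 2⁻¹ from by norm_num, mul_pow]
      rw [neg_one_pow_sub k (n : ℕ) hnk]
      ring
    · rw [if_neg hnk, Nat.choose_eq_zero_of_lt (by omega : k < (n : ℕ))]
      simp
  rw [step, key2 (m : ℕ) (n : ℕ), Matrix.one_apply]
  by_cases h : (m : ℕ) = (n : ℕ)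
  · rw [if_pos h, if_pos (Fin.ext h), h, Nat.sub_self, pow_zero, one_mul, ← pow_add]
    exact Even.neg_one_pow ⟨_, rfl⟩
  · rw [if_neg h, if_neg (fun hc => h (by rw [hc])), mul_zero]

/-- the matrices `T` and `T*` satisfy the braid relation
`T·T*·T = T*·T·T*`. -/
theorem stmt10 (N : ℕ) (hN : 2 ≤ N) :
    Tmat N * TstarMat N * Tmat N = TstarMat N * Tmat N * TstarMat N := by
  have h1 : Pmat N 2⁻¹ * Pmat N (-2⁻¹) = 1 := hPP N
  have h2 : Pmat N (-2⁻¹) * Pmat N 2⁻¹ = 1 := mul_eq_one_comm.mp h1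
  have e : ∀ X : Matrix (Fin N) (Fin N) ℚ,
      Pmat N (-2⁻¹) * (Pmat N 2⁻¹ * X) = X := fun X => by
    rw [← Matrix.mul_assoc, h2, Matrix.one_mul]
  have eV : ∀ X : Matrix (Fin N) (Fin N) ℚ,
      Vmat N * (Vmat N * X) = ((-1 : ℚ) ^ (N - 1)) • X := fun X => by
    rw [← Matrix.mul_assoc, hVV N, Matrix.smul_mul, Matrix.one_mul]
  have hsq : ((-1 : ℚ) ^ (N - 1)) * ((-1 : ℚ) ^ (N - 1)) = 1 := by
    rw [← pow_add]; exact Even.neg_one_pow ⟨_, rfl⟩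
  have hL : Tmat N * TstarMat N * Tmat N = Vmat N := by
    rw [hTstar N, hT1 N, Matrix.mul_assoc, e, ← hT1 N, hT2 N, Matrix.smul_mul,
      Matrix.mul_assoc, Matrix.mul_assoc, eV, Matrix.mul_smul, Matrix.mul_smul,
      h2, Matrix.mul_one, smul_smul, hsq, one_smul]
  have hR : TstarMat N * Tmat N * TstarMat N = Vmat N := by
    rw [hTstar N, hT1 N, e, Matrix.mul_assoc, h1, Matrix.mul_one]
  rw [hL, hR]
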